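/- In a hyperbolic triangle with side lengths a, b, c and angle γ opposite the side of length c, for every k > 0 there exist L > 0 and ε > 0 such that if c ≥ a + b − k and a, b > L, then γ > ε. -/

import Mathlib

set_option maxHeartbeats 1000000

/-- In a hyperbolic triangle with side lengths `a, b, c` and angle `γ` opposite the
side of length `c` (so that the hyperbolic law of cosines
`cosh c = cosh a cosh b − sinh a sinh b cos γ` holds): for every `k > 0` there exist
`L > 0` and `ε > 0` such that if `c ≥ a + b − k` and `a, b > L` then `γ > ε`. -/
theorem hyperbolic_triangle_angle_lower_bound :
    ∀ k : ℝ, 0 < k → ∃ L : ℝ, 0 < L ∧ ∃ ε : ℝ, 0 < ε ∧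
      ∀ a b c γ : ℝ, a > L → b > L → 0 ≤ γ → γ ≤ Real.pi →
        Real.cosh c = Real.cosh a * Real.cosh b - Real.sinh a * Real.sinh b * Real.cos γ →
        c ≥ a + b - k → γ > ε := by
  intro k hk
  refine ⟨k + 2, by linarith, Real.exp (-(k/2)) / 2, by positivity, ?_⟩
  intro a b c γ ha hb hγ0 hγπ hlaw hc
  have hsk : (0:ℝ) < a + b - k := by linarith
  -- Step 1: cosh (a+b-k) ≤ cosh c
  have h1 : Real.cosh (a + b - k) ≤ Real.cosh c := by
    rw [Real.cosh_le_cosh, abs_of_pos hsk]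
    calc a + b - k ≤ c := hc
      _ ≤ |c| := le_abs_self c
  -- Step 2: law of cosines rearranged
  have h2 : Real.sinh a * Real.sinh b + Real.sinh a * Real.sinh b * Real.cos γ
      ≤ Real.cosh (a + b) - Real.cosh (a + b - k) := by
    have := Real.cosh_add a b
    linarith
  set t := Real.exp (-k) with ht_def
  set v := Real.exp (-(2*k+4)) with hv_def
  have htpos : 0 < t := Real.exp_pos _
  have ht1 : t ≤ 1 := Real.exp_le_one_iff.mpr (by linarith)
  have hvpos : 0 < v := Real.exp_pos _
  have hvt : 5 * v ≤ t := by
    have h5 : (5:ℝ) ≤ Real.exp (k + 4) := by nlinarith [Real.add_one_le_exp (k + 4)]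
    have hvt' : v * Real.exp (k + 4) = t := by
      rw [hv_def, ht_def, ← Real.exp_add]; try ring_nf
    nlinarith [hvpos]
  set P := Real.exp (a + b) with hP_def
  have hPpos : 0 < P := Real.exp_pos _
  set Q := Real.exp (-(a + b)) with hQ_def
  have hQpos : 0 < Q := Real.exp_pos _
  -- exponential bounds
  have hQP : Q ≤ P * v := by
    rw [hQ_def, hP_def, ← Real.exp_add]
    exact Real.exp_le_exp.mpr (by linarith)
  have hab : Real.exp (a - b) ≤ P * v := by
    rw [hP_def, ← Real.exp_add]
    exact Real.exp_le_exp.mpr (by linarith)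
  have hba : Real.exp (b - a) ≤ P * v := by
    rw [hP_def, ← Real.exp_add]
    exact Real.exp_le_exp.mpr (by linarith)
  -- sinh a * sinh b ≥ P * (1 - 2v) / 4
  have hS : P * (1 - 2*v) / 4 ≤ Real.sinh a * Real.sinh b := by
    have e1 : Real.exp a * Real.exp b = P := (Real.exp_add a b).symm
    have e2 : Real.exp (-a) * Real.exp (-b) = Q := by
      rw [hQ_def, ← Real.exp_add]; congr 1; ring
    have e3 : Real.exp a * Real.exp (-b) = Real.exp (a - b) := by
      rw [← Real.exp_add]; try ring_nf
    have e4 : Real.exp (-a) * Real.exp b = Real.exp (b - a) := by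
      rw [← Real.exp_add]; try ring_nf
    rw [Real.sinh_eq, Real.sinh_eq]
    nlinarith [hQpos, hab, hba]
  -- cosh bounds
  have hCab : Real.cosh (a + b) ≤ (P + P * v) / 2 := by
    rw [Real.cosh_eq]; linarith
  have hCabk : P * t / 2 ≤ Real.cosh (a + b - k) := by
    rw [Real.cosh_eq]
    have e5 : Real.exp (a + b - k) = P * t := by
      rw [← Real.exp_add]; try ring_nf
    have := Real.exp_pos (-(a + b - k))
    linarith
  -- combine: (1 - 2v)(1 + cos γ) ≤ 2(1 + v - t)
  have hcos1 : -1 ≤ Real.cos γ := Real.neg_one_le_cos γ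
  have hkey : (1 - 2*v) * (1 + Real.cos γ) ≤ 2 * (1 + v - t) := by
    have h3 : Real.sinh a * Real.sinh b + Real.sinh a * Real.sinh b * Real.cos γ
        ≤ P * (1 + v - t) / 2 := by linarith
    have hc0 : (0:ℝ) ≤ 1 + Real.cos γ := by linarith
    have h4 : P * ((1 - 2*v) * (1 + Real.cos γ))
        ≤ 4 * (Real.sinh a * Real.sinh b + Real.sinh a * Real.sinh b * Real.cos γ) := by
      nlinarith [mul_nonneg (sub_nonneg.mpr hS) hc0]
    have h5 : (4:ℝ) * (P * (1 + v - t) / 2) = P * (2 * (1 + v - t)) := by ring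
    have h6 : P * ((1 - 2*v) * (1 + Real.cos γ)) ≤ P * (2 * (1 + v - t)) := by linarith
    exact (mul_le_mul_iff_right₀ hPpos).mp h6
  -- deduce cos γ ≤ 1 - t/2
  have hcos2 : Real.cos γ ≤ 1 - t / 2 := by
    nlinarith [Real.cos_le_one γ, mul_le_mul_of_nonneg_left (Real.cos_le_one γ) hvpos.le]
  -- quadratic bound on cos
  have hquad : 1 - γ ^ 2 / 2 ≤ Real.cos γ := Real.one_sub_sq_div_two_le_cos
  have hγsq : t ≤ γ ^ 2 := by linarith
  have hsq : Real.exp (-(k/2)) * Real.exp (-(k/2)) = t := by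
    rw [← Real.exp_add]; try ring_nf
    exact ht_def.symm
  nlinarith [Real.exp_pos (-(k/2)), sq_nonneg γ, hγ0, hγsq, hsq]
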